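/- Let F be a field, D a finite-dimensional central division algebra over F, and L a field extension of F such that the L-algebra D ⊗_F L is a division ring. Suppose K is a maximal subfield of D that is Galois over F, i.e. K is a commutative F-subalgebra of D which is a field, satisfies (dim_F K)² = dim_F D, and the field extension K/F is Galois. Then the subalgebra K ⊗_F L of D ⊗_F L is a field, it is a maximal subfield of the central division algebra D ⊗_F L over L (that is, (dim_L (K ⊗_F L))² = dim_L (D ⊗_F L)), and K ⊗_F L is a Galois extension of L. Consequently, if D ⊗_F L is a noncrossed product division algebra over L, then D is a noncrossed product division algebra over F. -/

import Mathlib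

set_option maxHeartbeats 1000000
set_option synthInstance.maxHeartbeats 400000

open scoped TensorProduct

section AuxBC

attribute [local instance] Algebra.TensorProduct.rightAlgebra

variable (F : Type*) [Field F] (L : Type*) [Field L] [Algebra F L]

private lemma tensorComm_smul (A : Type*) [Ring A] [Algebra F A] (l : L) (x : A ⊗[F] L) :
    TensorProduct.comm F A L (l • x) = l • TensorProduct.comm F A L x := by
  induction x using TensorProduct.induction_on with
  | zero => simp
  | tmul a m =>
    have h1 : l • (a ⊗ₜ[F] m) = a ⊗ₜ[F] (l * m) := by
      rw [Algebra.smul_def]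
      show ((1 : A) ⊗ₜ[F] l) * (a ⊗ₜ[F] m) = a ⊗ₜ[F] (l * m)
      rw [Algebra.TensorProduct.tmul_mul_tmul, one_mul]
    rw [h1]
    simp [TensorProduct.smul_tmul']
  | add x y hx hy => rw [smul_add, map_add, hx, hy, map_add, smul_add]

/-- The commutation `A ⊗[F] L ≃ L ⊗[F] A` as an `L`-linear equivalence, where
`A ⊗[F] L` carries the right `L`-module structure. -/
noncomputable def tensorCommL (A : Type*) [Ring A] [Algebra F A] :
    (A ⊗[F] L) ≃ₗ[L] (L ⊗[F] A) :=
  { TensorProduct.comm F A L with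
    map_smul' := fun l x => tensorComm_smul F L A l x }

lemma finrank_tensorL (A : Type*) [Ring A] [Algebra F A] :
    Module.finrank L (A ⊗[F] L) = Module.finrank F A := by
  rw [(tensorCommL F L A).finrank_eq, Module.finrank_baseChange]

lemma finite_tensorL (A : Type*) [Ring A] [Algebra F A] [FiniteDimensional F A] :
    FiniteDimensional L (A ⊗[F] L) :=
  Module.Finite.equiv (tensorCommL F L A).symm

end AuxBC

attribute [local instance] Algebra.TensorProduct.rightAlgebra

private lemma isField_range_of_injective {R A B : Type*} [Field R] [Ring A] [Algebra R A]
    [Ring B] [Algebra R B] (ψ : A →ₐ[R] B) (hinj : Function.Injective ψ)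
    (h : IsField A) :
    ∃ hS : IsField ↥ψ.range,
      Module.finrank R ↥ψ.range = Module.finrank R A ∧
      (@IsGalois R _ A h.toField (by exact inferInstance) →
        @IsGalois R _ ↥ψ.range hS.toField (by exact inferInstance)) := by
  haveI : Nontrivial A := h.nontrivial
  let e : A ≃ₐ[R] ψ.range := AlgEquiv.ofInjective ψ hinj
  have hS : IsField ↥ψ.range := by
    refine ⟨⟨e 0, e 1, fun heq => zero_ne_one (α := A) (e.injective heq)⟩, ?_, ?_⟩
    · intro a b
      obtain ⟨a', rfl⟩ := e.surjective a
      obtain ⟨b', rfl⟩ := e.surjective b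
      rw [← map_mul, ← map_mul, h.mul_comm]
    · intro a ha
      obtain ⟨a', rfl⟩ := e.surjective a
      have ha' : a' ≠ 0 := fun hz => ha (by rw [hz, map_zero])
      obtain ⟨b', hb⟩ := h.mul_inv_cancel ha'
      exact ⟨e b', by rw [← map_mul, hb, map_one]⟩
  refine ⟨hS, (e.toLinearEquiv.finrank_eq).symm, ?_⟩
  intro hGal
  letI : Field A := h.toField
  letI : Field ↥ψ.range := hS.toField
  haveI := hGal
  exact IsGalois.of_algEquiv e

/-- A central simple (e.g. division) algebra `D` over a field `F` is a *noncrossed product*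
if no maximal subfield of `D` is Galois over `F`: there is no commutative `F`-subalgebra `K`
of `D` which is a field, satisfies `(dim_F K)² = dim_F D`, and is a Galois extension of `F`. -/
def IsNoncrossedProduct (F : Type*) [Field F] (D : Type*) [Ring D] [Algebra F D] : Prop :=
  ¬ ∃ (K : Subalgebra F D) (hK : IsField K),
      (Module.finrank F K) ^ 2 = Module.finrank F D ∧
      @IsGalois F _ K hK.toField (by exact inferInstance)

/-- **Base change of Galois maximal subfields** (Brussel–Tengan).
Let `D` be a finite-dimensional central division algebra over a field `F` and let `L/F` be a
field extension such that `D ⊗[F] L` is a division ring.  If `K` is a maximal subfield of `D`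
that is Galois over `F` (a commutative `F`-subalgebra of `D` which is a field, with
`(dim_F K)² = dim_F D`, and Galois over `F`), then `K ⊗[F] L` is a field, it embeds as a
subalgebra of `D ⊗[F] L`, it is a maximal subfield of `D ⊗[F] L` over `L`
(`(dim_L (K ⊗[F] L))² = dim_L (D ⊗[F] L)`), and `K ⊗[F] L` is Galois over `L`.
Consequently, if `D ⊗[F] L` is a noncrossed product, then so is `D`. -/
theorem galois_maximal_subfield_base_change
    (F : Type*) [Field F] (D : Type*) [DivisionRing D] [Algebra F D]
    [FiniteDimensional F D] (hcentral : Subalgebra.center F D = ⊥)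
    (L : Type*) [Field L] [Algebra F L]
    (hdiv : ∀ x : D ⊗[F] L, x ≠ 0 → IsUnit x) :
    (∀ (K : Subalgebra F D) (hK : IsField K),
      (Module.finrank F K) ^ 2 = Module.finrank F D →
      (@IsGalois F _ K hK.toField (by exact inferInstance)) →
      ∃ hKL : IsField (↥K ⊗[F] L),
        Function.Injective (Algebra.TensorProduct.map K.val (AlgHom.id F L)) ∧
        (Module.finrank L (↥K ⊗[F] L)) ^ 2 = Module.finrank L (D ⊗[F] L) ∧
        @IsGalois L _ (↥K ⊗[F] L) hKL.toField (by exact inferInstance)) ∧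
    (IsNoncrossedProduct L (D ⊗[F] L) → IsNoncrossedProduct F D) := by
  -- no zero divisors in D ⊗ L
  have hzd : ∀ a b : D ⊗[F] L, a * b = 0 → a = 0 ∨ b = 0 := by
    intro a b hab
    by_cases ha : a = 0
    · exact Or.inl ha
    · right
      obtain ⟨u, hu⟩ := hdiv a ha
      have h : (↑u⁻¹ : D ⊗[F] L) * (a * b) = b := by
        rw [← hu, ← mul_assoc, Units.inv_mul, one_mul]
      rw [hab, mul_zero] at h
      exact h.symm
  have main : ∀ (K : Subalgebra F D) (hK : IsField K),
      (Module.finrank F K) ^ 2 = Module.finrank F D →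
      (@IsGalois F _ K hK.toField (by exact inferInstance)) →
      ∃ hKL : IsField (↥K ⊗[F] L),
        Function.Injective (Algebra.TensorProduct.map K.val (AlgHom.id F L)) ∧
        (Module.finrank L (↥K ⊗[F] L)) ^ 2 = Module.finrank L (D ⊗[F] L) ∧
        @IsGalois L _ (↥K ⊗[F] L) hKL.toField (by exact inferInstance) := by
    intro K hK hdim hGal
    -- injectivity of the canonical map into D ⊗ L
    have heq : (Algebra.TensorProduct.map K.val (AlgHom.id F L)).toLinearMap
        = LinearMap.rTensor L K.val.toLinearMap := TensorProduct.ext' (fun a b => by simp)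
    have hinj : Function.Injective (Algebra.TensorProduct.map K.val (AlgHom.id F L)) := by
      have h := Module.Flat.rTensor_preserves_injective_linearMap (M := L)
        K.val.toLinearMap Subtype.val_injective
      rw [show ⇑(Algebra.TensorProduct.map K.val (AlgHom.id F L))
          = ⇑(LinearMap.rTensor L K.val.toLinearMap) from by rw [← heq]; rfl]
      exact h
    letI instKF : Field ↥K := hK.toField
    haveI : FiniteDimensional F ↥K :=
      FiniteDimensional.of_injective K.val.toLinearMap Subtype.val_injective
    haveI : FiniteDimensional L (↥K ⊗[F] L) := finite_tensorL F L ↥K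
    have hfr : Module.finrank L (↥K ⊗[F] L) = Module.finrank F ↥K := finrank_tensorL F L ↥K
    set φ := Algebra.TensorProduct.map K.val (AlgHom.id F L) with hφ
    -- commutativity
    have hcomm : ∀ x y : ↥K ⊗[F] L, x * y = y * x := by
      intro x y
      induction x using TensorProduct.induction_on with
      | zero => rw [zero_mul, mul_zero]
      | add a b ha hb => rw [add_mul, mul_add, ha, hb]
      | tmul a m =>
        induction y using TensorProduct.induction_on with
        | zero => rw [zero_mul, mul_zero]
        | add c d hc hd => rw [mul_add, add_mul, hc, hd]
        | tmul c n =>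
          rw [Algebra.TensorProduct.tmul_mul_tmul, Algebra.TensorProduct.tmul_mul_tmul,
            hK.mul_comm a c, mul_comm m n]
    -- nontriviality
    haveI : Nontrivial ↥K := hK.nontrivial
    haveI : Nontrivial (↥K ⊗[F] L) := by
      rw [← Module.finrank_pos_iff (R := L), hfr]
      exact Module.finrank_pos
    -- inverses
    have hinv : ∀ x : ↥K ⊗[F] L, x ≠ 0 → ∃ y, x * y = 1 := by
      intro x hx
      have hmulinj : Function.Injective (LinearMap.mulLeft L x) := by
        intro a b hab
        have h1 : x * (a - b) = 0 := by
          have : x * a = x * b := hab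
          rw [mul_sub, this, sub_self]
        have h2 : φ x * φ (a - b) = 0 := by rw [← map_mul, h1, map_zero]
        rcases hzd _ _ h2 with h | h
        · exact absurd (hinj (h.trans (map_zero φ).symm)) hx
        · have := hinj (h.trans (map_zero φ).symm)
          exact sub_eq_zero.mp this
      obtain ⟨y, hy⟩ := LinearMap.surjective_of_injective hmulinj 1
      exact ⟨y, hy⟩
    have hKL : IsField (↥K ⊗[F] L) :=
      ⟨exists_pair_ne _, hcomm, fun {a} ha => hinv a ha⟩
    refine ⟨hKL, hinj, ?_, ?_⟩
    · rw [hfr, finrank_tensorL F L D]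
      exact hdim
    · letI instTF : Field (↥K ⊗[F] L) := hKL.toField
      haveI : IsDomain (↥K ⊗[F] L) := Field.isDomain
      haveI : NoZeroSMulDivisors L (↥K ⊗[F] L) :=
        inferInstance
      obtain ⟨p, hsep, hsp⟩ := IsGalois.is_separable_splitting_field F ↥K
      haveI hsp' : Polynomial.IsSplittingField L (↥K ⊗[F] L) (p.map (algebraMap F L)) := by
        constructor
        · rw [Polynomial.map_map]
          have h1 : (algebraMap L (↥K ⊗[F] L)).comp (algebraMap F L)
              = algebraMap F (↥K ⊗[F] L) := (IsScalarTower.algebraMap_eq F L _).symm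
          rw [h1]
          have h2 : algebraMap F (↥K ⊗[F] L)
              = (Algebra.TensorProduct.includeLeft : ↥K →ₐ[F] ↥K ⊗[F] L).toRingHom.comp
                (algebraMap F ↥K) := by
            ext r
            simp
          rw [h2, ← Polynomial.map_map]
          exact hsp.splits.map _
        · set q := p.map (algebraMap F L) with hq
          set S := Algebra.adjoin L (q.rootSet (↥K ⊗[F] L)) with hSdef
          have hι : ∀ a : ↥K, (Algebra.TensorProduct.includeLeft : ↥K →ₐ[F] ↥K ⊗[F] L) a ∈ S := by
            intro a
            have hsub : p.rootSet ↥K ⊆ (Subalgebra.comap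
                (Algebra.TensorProduct.includeLeft : ↥K →ₐ[F] ↥K ⊗[F] L)
                (S.restrictScalars F) : Subalgebra F ↥K) := by
              intro r hr
              rw [Polynomial.mem_rootSet] at hr
              show (Algebra.TensorProduct.includeLeft : ↥K →ₐ[F] ↥K ⊗[F] L) r ∈ S
              apply Algebra.subset_adjoin
              rw [Polynomial.mem_rootSet]
              refine ⟨Polynomial.map_ne_zero hr.1, ?_⟩
              rw [hq, Polynomial.aeval_map_algebraMap, Polynomial.aeval_algHom_apply, hr.2,
                map_zero]
            have htop : (Subalgebra.comap
                (Algebra.TensorProduct.includeLeft : ↥K →ₐ[F] ↥K ⊗[F] L)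
                (S.restrictScalars F) : Subalgebra F ↥K) = ⊤ := by
              rw [eq_top_iff, ← hsp.adjoin_rootSet]
              exact Algebra.adjoin_le hsub
            have hmem : a ∈ (⊤ : Subalgebra F ↥K) := trivial
            rw [← htop] at hmem
            exact hmem
          rw [eq_top_iff]
          intro x hxtop
          clear hxtop
          induction x using TensorProduct.induction_on with
          | zero => exact S.zero_mem
          | add a b ha hb => exact S.add_mem ha hb
          | tmul a m =>
            have hx : (a ⊗ₜ[F] m : ↥K ⊗[F] L) = m • ((a : ↥K) ⊗ₜ[F] (1 : L)) := by
              rw [Algebra.smul_def]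
              show a ⊗ₜ[F] m = ((1 : ↥K) ⊗ₜ[F] m) * (a ⊗ₜ[F] (1 : L))
              rw [Algebra.TensorProduct.tmul_mul_tmul, one_mul, mul_one]
            rw [hx]
            exact S.smul_mem (hι a) m
      exact IsGalois.of_separable_splitting_field (hsep.map (f := algebraMap F L))
  refine ⟨main, ?_⟩
  intro hL hexists
  obtain ⟨K, hK, hdim, hGal⟩ := hexists
  obtain ⟨hKL, hinj, hdim2, hGal2⟩ := main K hK hdim hGal
  apply hL
  let ψ : (↥K ⊗[F] L) →ₐ[L] (D ⊗[F] L) :=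
    { Algebra.TensorProduct.map K.val (AlgHom.id F L) with
      commutes' := fun l => by
        show Algebra.TensorProduct.map K.val (AlgHom.id F L) ((1 : ↥K) ⊗ₜ[F] l)
            = (1 : D) ⊗ₜ[F] l
        simp }
  have hinjψ : Function.Injective ψ := hinj
  obtain ⟨hS, hfrS, hGS⟩ := isField_range_of_injective ψ hinjψ hKL
  exact ⟨ψ.range, hS, by rw [hfrS]; exact hdim2, hGS hGal2⟩
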